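/- Let V be a reflexive Banach space and (π, ξ) a left covariant representation of a Banach algebra A on V (π: A → B(V) a contractive homomorphism, ξ: A → V a contractive linear map with ξ(ab) = π(a)ξ(b)). Suppose A has a bounded approximate identity (a_i) with ‖a_i‖ ≤ 1. Then there exists ξ₀ ∈ V with ‖ξ₀‖ ≤ 1 and ξ(a) = π(a)ξ₀ for all a ∈ A. -/

import Mathlib

/-- let `V` be a reflexive Banach space (reflexivity encoded by weak
compactness of the closed unit ball) and `(π, ξ)` a left covariant representation of
a Banach algebra `A` on `V`: `π` a contractive homomorphism `A → B(V)`, `ξ : A → V` a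
contractive linear map with `ξ (a b) = π a (ξ b)`.  If `A` has a bounded approximate
identity `(u i)` with `‖u i‖ ≤ 1`, then there is `ξ₀ ∈ V` with `‖ξ₀‖ ≤ 1` and
`ξ a = π a ξ₀` for all `a`. -/
theorem stmt_14 {A V : Type*} [NonUnitalNormedRing A] [NormedSpace ℂ A]
    [IsScalarTower ℂ A A] [SMulCommClass ℂ A A] [CompleteSpace A]
    [NormedAddCommGroup V] [NormedSpace ℂ V]
    (hV : IsCompact (X := WeakSpace ℂ V) (Metric.closedBall (0 : V) 1 : Set V))
    (π : A → V →L[ℂ] V) (hπc : ∀ a : A, ‖π a‖ ≤ ‖a‖)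
    (hπm : ∀ a b : A, π (a * b) = (π a).comp (π b))
    (ξ : A →L[ℂ] V) (hξ : ‖ξ‖ ≤ 1)
    (hcov : ∀ a b : A, ξ (a * b) = π a (ξ b))
    {ι : Type*} (l : Filter ι) [l.NeBot] (u : ι → A)
    (hu : ∀ i, ‖u i‖ ≤ 1)
    (hai : ∀ a : A, Filter.Tendsto (fun i => a * u i) l (nhds a)) :
    ∃ ξ₀ : V, ‖ξ₀‖ ≤ 1 ∧ ∀ a : A, ξ a = π a ξ₀ := by
  classical
  -- the net `ξ (u i)` lives in the weakly compact unit ball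
  have hmem : ∀ i, ξ (u i) ∈ (Metric.closedBall (0 : V) 1 : Set V) := by
    intro i
    rw [Metric.mem_closedBall, dist_zero_right]
    calc ‖ξ (u i)‖ ≤ ‖ξ‖ * ‖u i‖ := ξ.le_opNorm _
      _ ≤ 1 * 1 := mul_le_mul hξ (hu i) (norm_nonneg _) zero_le_one
      _ = 1 := one_mul 1
  -- extract a weak cluster point
  have hle : Filter.map (fun i => (ξ (u i) : WeakSpace ℂ V)) l ≤
      Filter.principal (Metric.closedBall (0 : V) 1 : Set V) := by
    rw [Filter.le_principal_iff]
    exact Filter.mem_map.mpr (Filter.Eventually.of_forall hmem)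
  obtain ⟨ξ₀, hξ₀mem, hcl⟩ := @hV _ Filter.map_neBot hle
  refine ⟨ξ₀, by exact (dist_zero_right ((toWeakSpace ℂ V).symm ξ₀) ▸ hξ₀mem : ‖(toWeakSpace ℂ V).symm ξ₀‖ ≤ 1), fun a => ?_⟩
  have hclmap : MapClusterPt (X := WeakSpace ℂ V) ξ₀ l (fun i => ξ (u i)) := hcl
  -- it suffices to test against all continuous linear functionals
  rw [NormedSpace.eq_iff_forall_dual_eq ℂ]
  intro g
  set f : V →L[ℂ] ℂ := g.comp (π a) with hf
  -- `f` is continuous on the weak space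
  have hfw : Continuous fun x : WeakSpace ℂ V => f x :=
    WeakBilin.eval_continuous ((topDualPairing ℂ V).flip) f
  -- so `f ξ₀` is a cluster point of `f (ξ (u i))`
  have h1 : MapClusterPt (f ξ₀) l (fun i => f (ξ (u i))) :=
    hclmap.continuousAt_comp hfw.continuousAt
  -- but `f (ξ (u i)) = g (ξ (a * u i))` tends to `g (ξ a)`
  have h2 : Filter.Tendsto (fun i => f (ξ (u i))) l (nhds (g (ξ a))) := by
    have : Filter.Tendsto (fun i => ξ (a * u i)) l (nhds (ξ a)) :=
      (ξ.continuous.tendsto _).comp (hai a)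
    have h3 : Filter.Tendsto (fun i => g (ξ (a * u i))) l (nhds (g (ξ a))) :=
      (g.continuous.tendsto _).comp this
    refine h3.congr fun i => ?_
    simp [hf, hcov a (u i)]
  -- in the Hausdorff space `ℂ`, cluster point of a convergent net is the limit
  have : f ξ₀ = g (ξ a) := by
    have hne : (nhds (f ξ₀) ⊓ nhds (g (ξ a))).NeBot :=
      h1.clusterPt.neBot.mono (inf_le_inf_left _ h2)
    exact eq_of_nhds_neBot hne
  exact this.symm
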